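/- Every binary concept class C ⊆ {0,1}^X with finite Littlestone dimension d_LD admits an infinitized sample compression scheme of size at most d_LD (the compression set consists of at most d_LD labeled examples and no side-information bits). -/
import Mathlib


universe u

/-- A (possibly infinite) sample `S` is realizable by the concept class `C`. -/
def RealizableSet {X Y : Type*} (C : Set (X → Y)) (S : Set (X × Y)) : Prop :=
  ∃ c ∈ C, ∀ p ∈ S, c p.1 = p.2

/-- `(κ, ρ)` is an infinitized sample compression scheme for `C` of size at most `k`:
`κ` maps any (possibly infinite) sample to a finite subsample together with a finite
bitstring of total length at most `k` (on realizable samples), and `ρ` reconstructs a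
predictor consistent with the whole sample. -/
def IsInfinitizedScheme {X Y : Type*} (C : Set (X → Y)) (k : ℕ)
    (κ : Set (X × Y) → List (X × Y) × List Bool)
    (ρ : List (X × Y) × List Bool → X → Y) : Prop :=
  (∀ S : Set (X × Y), ∀ p ∈ (κ S).1, p ∈ S) ∧
  (∀ S : Set (X × Y), RealizableSet C S → (κ S).1.length + (κ S).2.length ≤ k) ∧
  (∀ S : Set (X × Y), RealizableSet C S → ∀ p ∈ S, ρ (κ S) p.1 = p.2)

/-- A Littlestone tree of depth `n` for the binary class `C` is shattered: defined
recursively on version spaces. `LShattersN 0 C` holds iff `C` is nonempty, and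
`LShattersN (n+1) C` holds iff there is a point `x` such that both restrictions of `C`
(forcing `c x = 0` resp. `c x = 1`) shatter a tree of depth `n`. -/
def LShattersN {X : Type*} : ℕ → Set (X → Bool) → Prop
  | 0, C => C.Nonempty
  | n + 1, C => ∃ x : X,
      LShattersN n {c ∈ C | c x = false} ∧ LShattersN n {c ∈ C | c x = true}

/-- `C` has (finite) Littlestone dimension exactly `d`. -/
def IsLittlestoneDim {X : Type*} (C : Set (X → Bool)) (d : ℕ) : Prop :=
  LShattersN d C ∧ ¬ LShattersN (d + 1) C


section Aux

variable {X : Type u}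

/-- Restrict a version space by one labeled example. -/
def restrictC (C : Set (X → Bool)) (p : X × Bool) : Set (X → Bool) :=
  {c ∈ C | c p.1 = p.2}

open Classical in
/-- Standard-optimal-algorithm style predictor at "budget" `n`. -/
noncomputable def SOA (n : ℕ) (C : Set (X → Bool)) (x : X) : Bool :=
  if LShattersN n {c ∈ C | c x = true} then true else false

open Classical in
noncomputable def compress : ℕ → Set (X → Bool) → Set (X × Bool) → List (X × Bool)
  | 0, _, _ => []
  | n+1, C, S =>
    if h : ∃ p ∈ S, SOA (n+1) C p.1 ≠ p.2 then
      h.choose :: compress n (restrictC C h.choose) S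
    else []

lemma SOA_eq_true {n : ℕ} {C : Set (X → Bool)} {x : X}
    (h : LShattersN n {c ∈ C | c x = true}) : SOA n C x = true := by
  simp [SOA, h]

lemma SOA_eq_false {n : ℕ} {C : Set (X → Bool)} {x : X}
    (h : ¬ LShattersN n {c ∈ C | c x = true}) : SOA n C x = false := by
  simp [SOA, h]

lemma compress_subset : ∀ (n : ℕ) (C : Set (X → Bool)) (S : Set (X × Bool)),
    ∀ p ∈ compress n C S, p ∈ S := by
  intro n
  induction n with
  | zero => intro C S p hp; simp [compress] at hp
  | succ n ih =>
    intro C S p hp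
    rw [compress] at hp
    split at hp
    · next h =>
      rcases List.mem_cons.mp hp with h1 | h1
      · exact h1 ▸ h.choose_spec.1
      · exact ih _ _ _ h1
    · simp at hp

lemma compress_length : ∀ (n : ℕ) (C : Set (X → Bool)) (S : Set (X × Bool)),
    (compress n C S).length ≤ n := by
  intro n
  induction n with
  | zero => intro C S; simp [compress]
  | succ n ih =>
    intro C S
    rw [compress]
    split
    · simpa using ih _ _
    · simp

lemma compress_consistent : ∀ (n : ℕ) (C : Set (X → Bool)) (S : Set (X × Bool)),
    ¬ LShattersN (n+1) C → RealizableSet C S →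
    ∀ p ∈ S,
      SOA (n - (compress n C S).length) (List.foldl restrictC C (compress n C S)) p.1 = p.2 := by
  intro n
  induction n with
  | zero =>
    intro C S hC hreal p hp
    obtain ⟨c, hcC, hc⟩ := hreal
    have hcp : c p.1 = p.2 := hc p hp
    simp only [compress, List.length_nil, List.foldl_nil, Nat.sub_zero]
    cases hb : p.2 with
    | true =>
      apply SOA_eq_true
      exact ⟨c, hcC, by rw [hcp, hb]⟩
    | false =>
      apply SOA_eq_false
      rintro ⟨c', hc'C, hc't⟩
      exact hC ⟨p.1, ⟨c, hcC, by rw [hcp, hb]⟩, ⟨c', hc'C, hc't⟩⟩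
  | succ n ih =>
    intro C S hC hreal p hp
    rw [compress]
    split
    · next h =>
      obtain ⟨hq, hq2⟩ := h.choose_spec
      set q := h.choose with hqdef
      obtain ⟨c, hcC, hc⟩ := hreal
      have hcq : c q.1 = q.2 := hc q hq
      have hreal' : RealizableSet (restrictC C q) S := ⟨c, ⟨hcC, hcq⟩, hc⟩
      have hC' : ¬ LShattersN (n+1) (restrictC C q) := by
        cases hb : q.2 with
        | true =>
          have : SOA (n+1) C q.1 = false := by
            cases hs : SOA (n+1) C q.1
            · rfl
            · exact absurd (hs.trans hb.symm) hq2
          have hns : ¬ LShattersN (n+1) {c ∈ C | c q.1 = true} := by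
            intro hsh
            rw [SOA_eq_true hsh] at this
            exact Bool.noConfusion this
          intro hsh
          apply hns
          have : restrictC C q = {c ∈ C | c q.1 = true} := by
            unfold restrictC; rw [hb]
          rwa [this] at hsh
        | false =>
          have hst : SOA (n+1) C q.1 = true := by
            cases hs : SOA (n+1) C q.1
            · exact absurd (hs.trans hb.symm) hq2
            · rfl
          have hsh : LShattersN (n+1) {c ∈ C | c q.1 = true} := by
            by_contra hn
            rw [SOA_eq_false hn] at hst
            exact Bool.noConfusion hst
          intro hsh'
          apply hC
          refine ⟨q.1, ?_, hsh⟩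
          have : restrictC C q = {c ∈ C | c q.1 = false} := by
            unfold restrictC; rw [hb]
          rwa [this] at hsh'
      have := ih (restrictC C q) S hC' hreal' p hp
      simpa [Nat.succ_sub_succ] using this
    · next h =>
      push_neg at h
      simp only [List.length_nil, List.foldl_nil, Nat.sub_zero]
      exact h p hp

end Aux

/-- Every binary concept class of finite Littlestone dimension `d_LD` admits an
infinitized sample compression scheme of size at most `d_LD`, whose compression set
consists of at most `d_LD` labeled examples and no side-information bits. -/
theorem infinitized_compression_of_littlestone {X : Type u}
    (C : Set (X → Bool)) (d : ℕ) (hC : IsLittlestoneDim C d) :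
    ∃ (κ : Set (X × Bool) → List (X × Bool) × List Bool)
      (ρ : List (X × Bool) × List Bool → X → Bool),
      IsInfinitizedScheme C d κ ρ ∧
      (∀ S : Set (X × Bool), RealizableSet C S → (κ S).2 = []) := by
  refine ⟨fun S => (compress d C S, []), fun q x => SOA (d - q.1.length) (List.foldl restrictC C q.1) x, ⟨?_, ?_, ?_⟩, fun S _ => rfl⟩
  · intro S p hp
    exact compress_subset d C S p hp
  · intro S _
    simpa using compress_length d C S
  · intro S hreal p hp
    exact compress_consistent d C S hC.2 hreal p hp
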